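/- Let p : E → X be a covering map, e₀ ∈ E, x₀ = p(e₀), and let f : Y → X be a continuous map from a topological space Y with f(y₀) = x₀ for a basepoint y₀ ∈ Y. Then the image of f_* : π₁(Y, y₀) → π₁(X, x₀) is contained in the image of p_* : π₁(E, e₀) → π₁(X, x₀) if and only if for every loop γ in Y based at y₀, the unique lift of the loop f ∘ γ to E starting at e₀ ends at e₀. -/

import Mathlib

open CategoryTheory

/-- The group homomorphism `f⁎ : π₁(Y, y₀) →* π₁(X, x₀)` induced on fundamental groups by a
continuous map `f : Y → X` with `f y₀ = x₀`. -/
noncomputable def FundamentalGroup.inducedHom {Y X : Type u} [TopologicalSpace Y]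
    [TopologicalSpace X] (f : C(Y, X)) (y₀ : Y) (x₀ : X) (hf : f y₀ = x₀) :
    Aut (FundamentalGroupoid.mk y₀ : FundamentalGroupoid Y) →*
      Aut (FundamentalGroupoid.mk x₀ : FundamentalGroupoid X) :=
  let F : TopCat.of Y ⟶ TopCat.of X := TopCat.ofHom f
  let Φ : FundamentalGroupoid (TopCat.of Y) ⥤ FundamentalGroupoid (TopCat.of X) :=
    FundamentalGroupoid.fundamentalGroupoidFunctor.map F
  have hobj : Φ.obj ⟨y₀⟩ = (⟨x₀⟩ : FundamentalGroupoid (TopCat.of X)) := by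
    subst hf; rfl
  ((CategoryTheory.eqToIso hobj).conjAut.toMonoidHom).comp
    (CategoryTheory.Functor.mapAut ⟨y₀⟩ Φ)

/-- The element of the fundamental group `π₁(X, x)` determined by a loop based at `x`. -/
noncomputable def FundamentalGroup.fromLoop {X : Type u} [TopologicalSpace X] {x : X}
    (α : Path x x) : Aut (FundamentalGroupoid.mk x : FundamentalGroupoid X) :=
  (Groupoid.isoEquivHom _ _).symm
    (FundamentalGroup.fromPath (X := TopCat.of X) (Quotient.mk (Path.Homotopic.setoid x x) α))

/-! ### Auxiliary lemmas: path lifting and monodromy for covering maps -/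

namespace CoveringLiftAux

open unitInterval Set

variable {E X : Type*} [TopologicalSpace E] [TopologicalSpace X] {p : E → X}

/-- Extend a partial lift over an interval contained in the base set of a trivialization. -/
lemma extend_lift {F : Type*} [TopologicalSpace F] (T : Bundle.Trivialization F p)
    (γ : C(I, X)) {a b : I} (hab : a ≤ b) (hbase : ∀ t, a ≤ t → t ≤ b → γ t ∈ T.baseSet)
    (g : C(I, E)) (hg : ∀ t, t ≤ a → p (g t) = γ t) :
    ∃ g' : C(I, E), (∀ t, t ≤ b → p (g' t) = γ t) ∧ ∀ t, t ≤ a → g' t = g t := by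
  have hsrc : g a ∈ T.source := T.mem_source.2 (by rw [hg a le_rfl]; exact hbase a le_rfl hab)
  set i := (T (g a)).2 with hi
  set proj : I → I := fun t => max a (min t b) with hproj
  have hprojc : Continuous proj := Continuous.max continuous_const (continuous_id.min continuous_const)
  have hproj_mem : ∀ t, a ≤ proj t ∧ proj t ≤ b := fun t =>
    ⟨le_max_left _ _, max_le hab (min_le_right _ _)⟩
  have htarget : ∀ t : I, (γ (proj t), i) ∈ T.target := fun t =>
    T.mem_target.2 (hbase _ (hproj_mem t).1 (hproj_mem t).2)
  set h : I → E := fun t => T.toPartialHomeomorph.symm (γ (proj t), i) with hh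
  have hhc : Continuous h := by
    refine T.toPartialHomeomorph.symm.continuousOn.comp_continuous ?_ htarget
    exact (γ.continuous.comp hprojc).prodMk continuous_const
  have hph : ∀ t, p (h t) = γ (proj t) := fun t => T.proj_symm_apply (htarget t)
  have hha : h a = g a := by
    have hpa : proj a = a := by
      rw [hproj]; simp only [min_eq_left hab, max_self]
    rw [hh]
    simp only [hpa]
    have : (γ a, i) = T (g a) := by
      rw [← hg a le_rfl, hi]; exact T.mk_proj_snd hsrc
    rw [this]; exact T.toPartialHomeomorph.left_inv hsrc
  classical
  refine ⟨⟨fun t => if t ≤ a then g t else h t, ?_⟩, ?_, ?_⟩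
  · exact Continuous.if_le g.continuous hhc continuous_id continuous_const
      (fun t ht => by rw [ht, hha])
  · intro t htb
    by_cases hta : t ≤ a
    · simpa [hta] using hg t hta
    · have h1 : proj t = t := by
        rw [hproj]; simp only [min_eq_left htb, max_eq_right (le_of_not_ge hta)]
      simpa [hta, hph t, h1] using rfl
  · intro t hta; simp [hta]

/-- Path lifting for covering maps. -/
lemma exists_lift (hp : IsCoveringMap p) (γ : C(I, X)) (e₀ : E) (he : p e₀ = γ 0) :
    ∃ Γ : C(I, E), Γ 0 = e₀ ∧ ∀ t, p (Γ t) = γ t := by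
  obtain ⟨Γ, h1, h2⟩ := hp.exists_path_lifts γ e₀ he.symm
  exact ⟨Γ, h2, fun t => congrFun h1 t⟩

lemma isPreconnected_Icc_I (a b : I) : _root_.IsPreconnected (Icc a b : Set I) := by
  have himg : (Icc a b : Set I) = (projIcc 0 1 zero_le_one) '' Icc (a:ℝ) (b:ℝ) := by
    ext c
    constructor
    · rintro ⟨h1, h2⟩
      exact ⟨(c:ℝ), ⟨Subtype.coe_le_coe.2 h1, Subtype.coe_le_coe.2 h2⟩,
        projIcc_val zero_le_one c⟩
    · rintro ⟨r, ⟨h1, h2⟩, rfl⟩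
      refine ⟨?_, ?_⟩
      · have := monotone_projIcc zero_le_one h1
        rwa [projIcc_val zero_le_one a] at this
      · have := monotone_projIcc zero_le_one h2
        rwa [projIcc_val zero_le_one b] at this
  rw [himg]
  exact isPreconnected_Icc.image _ (continuous_projIcc).continuousOn


/-- monodromy: homotopic paths have lifts with the same endpoint. -/
lemma endpoint_eq (hp : IsCoveringMap p) {x₀ x₁ : X} {α β : Path x₀ x₁}
    (h : Path.Homotopic α β) {e₀ : E} (he : p e₀ = x₀)
    {A B : C(I, E)} (hA0 : A 0 = e₀) (hB0 : B 0 = e₀)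
    (hA : ∀ t, p (A t) = α t) (hB : ∀ t, p (B t) = β t) : A 1 = B 1 := by
  obtain ⟨H⟩ := h
  -- family of lifts of the paths H (s, ·)
  have hfam : ∀ s : I, ∃ g : C(I, E), g 0 = e₀ ∧ ∀ t, p (g t) = H (s, t) := by
    intro s
    refine exists_lift hp (H.toContinuousMap.comp ⟨fun t => (s, t), by continuity⟩) e₀ ?_
    show p e₀ = H (s, 0)
    rw [H.source s, he]
  choose g hg0 hgp using hfam
  -- local constancy of the endpoint
  have key : ∀ s₀ : I, ∃ ε > 0, ∀ s : I, dist s s₀ < ε → g s 1 = g s₀ 1 := by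
    intro s₀
    haveI : ∀ t : I, Nonempty ↑(p ⁻¹' {H (s₀, t)}) := fun t => ⟨⟨g s₀ t, hgp s₀ t⟩⟩
    let V := fun t : I => (hp (H (s₀, t))).toTrivialization
    have hVmem : ∀ t, H (s₀, t) ∈ (V t).baseSet :=
      fun t => (hp _).mem_toTrivialization_baseSet
    have hOopen : ∀ t : I, IsOpen {q : I × I | H q ∈ (V t).baseSet} :=
      fun t => (V t).open_baseSet.preimage H.continuous
    choose Av Bv hAvo hBvo hAvm hBvm hABsub using
      fun t : I => (isOpen_prod_iff.1 (hOopen t)) s₀ t (hVmem t)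
    obtain ⟨δ, hδ, hleb⟩ := lebesgue_number_lemma_of_metric isCompact_univ hBvo
      (fun t _ => mem_iUnion.2 ⟨t, hBvm t⟩)
    obtain ⟨n, hn⟩ := exists_nat_one_div_lt hδ
    set N : ℕ := n + 1 with hNdef
    have hN0 : (0:ℝ) < N := by positivity
    have hN : (1:ℝ)/N < δ := by rw [hNdef]; push_cast; push_cast at hn; convert hn using 2
    have hmem : ∀ i : ℕ, min ((i:ℝ) / N) 1 ∈ Icc (0:ℝ) 1 :=
      fun i => ⟨le_min (by positivity) zero_le_one, min_le_right _ _⟩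
    let τ : ℕ → I := fun i => ⟨min ((i:ℝ) / N) 1, hmem i⟩
    have hτ0 : τ 0 = 0 := Subtype.ext (by simp [τ])
    have hτN : τ N = 1 := Subtype.ext (by simp [τ, le_of_eq (div_self (ne_of_gt hN0)).symm,
      div_self (ne_of_gt hN0)])
    have hτmono : ∀ i : ℕ, τ i ≤ τ (i+1) := by
      intro i
      rw [← Subtype.coe_le_coe]
      show min ((i:ℝ)/N) 1 ≤ min (((i+1:ℕ):ℝ)/N) 1
      push_cast
      gcongr
      linarith
    have hτdiff : ∀ i : ℕ, (τ (i+1) : ℝ) - (τ i : ℝ) ≤ 1/N := by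
      intro i
      show min (((i+1:ℕ):ℝ)/N) 1 - min ((i:ℝ)/N) 1 ≤ 1/N
      have hdiv : (((i+1:ℕ)):ℝ)/N = (i:ℝ)/N + 1/N := by push_cast; ring
      have h1N : (0:ℝ) ≤ 1/N := by positivity
      rcases min_cases ((i:ℝ)/N) 1 with ⟨h1,h2⟩|⟨h1,h2⟩ <;>
        rcases min_cases ((((i+1:ℕ)):ℝ)/N) 1 with ⟨h3,h4⟩|⟨h3,h4⟩ <;>
        rw [h1, h3] <;> linarith
    choose c hc using fun i : ℕ => hleb (τ i) trivial
    have hseg : ∀ i : ℕ, ∀ t : I, τ i ≤ t → t ≤ τ (i+1) → t ∈ Bv (c i) := by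
      intro i t h1 h2
      apply hc i
      rw [Metric.mem_ball, Subtype.dist_eq, Real.dist_eq,
        abs_of_nonneg (sub_nonneg.2 (Subtype.coe_le_coe.2 h1))]
      have := hτdiff i
      have h2' : (t:ℝ) ≤ (τ (i+1) : ℝ) := Subtype.coe_le_coe.2 h2
      have h1' : (τ i : ℝ) ≤ (t:ℝ) := Subtype.coe_le_coe.2 h1
      linarith
    set U := ⋂ i ∈ Finset.range N, Av (c i) with hU
    have hUopen : IsOpen U := isOpen_biInter_finset (fun i _ => hAvo (c i))
    have hs₀U : s₀ ∈ U := mem_iInter₂.2 fun i _ => hAvm (c i)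
    have hUA : ∀ u ∈ U, ∀ i < N, u ∈ Av (c i) :=
      fun u hu i hi => mem_iInter₂.1 hu i (Finset.mem_range.2 hi)
    obtain ⟨ε, hε, hballU⟩ := Metric.isOpen_iff.1 hUopen s₀ hs₀U
    refine ⟨ε, hε, ?_⟩
    intro s hs
    have hsU : s ∈ U := hballU (by rwa [Metric.mem_ball])
    have hmemBase : ∀ i < N, ∀ u ∈ U, ∀ t : I, τ i ≤ t → t ≤ τ (i+1) →
        H (u, t) ∈ (V (c i)).baseSet := by
      intro i hi u hu t h1 h2
      exact hABsub (c i) ⟨hUA u hu i hi, hseg i t h1 h2⟩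
    haveI : ∀ t : I, DiscreteTopology ↑(p ⁻¹' {H (s₀, t)}) := fun t => (hp _).1
    have hsrc : ∀ i < N, ∀ u ∈ U, ∀ t : I, τ i ≤ t → t ≤ τ (i+1) →
        g u t ∈ (V (c i)).source := fun i hi u hu t h1 h2 =>
      (V (c i)).mem_source.2 (by rw [hgp u t]; exact hmemBase i hi u hu t h1 h2)
    have hconst : ∀ i < N, ∀ u ∈ U,
        ((V (c i)) (g u (τ i))).2 = ((V (c i)) (g u (τ (i+1)))).2 := by
      intro i hi u hu
      have hcont : ContinuousOn (fun t => ((V (c i)) (g u t)).2) (Icc (τ i) (τ (i+1))) := by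
        apply continuous_snd.comp_continuousOn
        apply (V (c i)).toOpenPartialHomeomorph.continuousOn.comp (g u).continuous.continuousOn
        intro t ht
        exact hsrc i hi u hu t ht.1 ht.2
      exact ((isPreconnected_Icc_I _ _).image _ hcont).subsingleton
        (mem_image_of_mem _ (left_mem_Icc.2 (hτmono i)))
        (mem_image_of_mem _ (right_mem_Icc.2 (hτmono i)))
    -- the crucial induction on segments
    have claim : ∀ i, i < N → ((V (c i)) (g s (τ i))).2 = ((V (c i)) (g s₀ (τ i))).2 := by
      intro i
      induction i with
      | zero => intro _; rw [hτ0, hg0, hg0]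
      | succ i ih =>
        intro hi1
        have hi : i < N := Nat.lt_of_succ_lt hi1
        have h1 : ((V (c i)) (g s (τ (i+1)))).2 = ((V (c i)) (g s₀ (τ (i+1)))).2 := by
          rw [← hconst i hi s hsU, ← hconst i hi s₀ hs₀U, ih hi]
        set j := ((V (c i)) (g s₀ (τ (i+1)))).2 with hj
        -- the straight segment from s₀ to s inside U
        have hmemσ : ∀ r : I, (s₀:ℝ) + (r:ℝ) * ((s:ℝ) - (s₀:ℝ)) ∈ Icc (0:ℝ) 1 := by
          intro r
          constructor
          · nlinarith [r.2.1, r.2.2, s.2.1, s₀.2.1, mul_nonneg (sub_nonneg.2 r.2.2) s₀.2.1,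
              mul_nonneg r.2.1 s.2.1]
          · nlinarith [r.2.1, r.2.2, s.2.2, s₀.2.2, mul_nonneg (sub_nonneg.2 r.2.2)
              (sub_nonneg.2 s₀.2.2), mul_nonneg r.2.1 (sub_nonneg.2 s.2.2)]
        let σf : I → I := fun r => ⟨(s₀:ℝ) + (r:ℝ) * ((s:ℝ) - (s₀:ℝ)), hmemσ r⟩
        have hσc : Continuous σf := Continuous.subtype_mk
          (continuous_const.add (continuous_subtype_val.mul continuous_const)) _
        have hσU : ∀ r : I, σf r ∈ U := by
          intro r
          apply hballU
          rw [Metric.mem_ball, Subtype.dist_eq]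
          show |((s₀:ℝ) + (r:ℝ) * ((s:ℝ) - (s₀:ℝ))) - (s₀:ℝ)| < ε
          have h1 : ((s₀:ℝ) + (r:ℝ) * ((s:ℝ) - (s₀:ℝ))) - (s₀:ℝ) = (r:ℝ) * ((s:ℝ) - (s₀:ℝ)) := by
            ring
          rw [h1, abs_mul]
          have hr1 : |(r:ℝ)| ≤ 1 := by rw [abs_of_nonneg r.2.1]; exact r.2.2
          have hd : |(s:ℝ) - (s₀:ℝ)| = dist s s₀ := by rw [Subtype.dist_eq, Real.dist_eq]
          calc |(r:ℝ)| * |(s:ℝ) - (s₀:ℝ)| ≤ 1 * |(s:ℝ) - (s₀:ℝ)| :=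
                mul_le_mul_of_nonneg_right hr1 (abs_nonneg _)
            _ = dist s s₀ := by rw [one_mul, hd]
            _ < ε := hs
        have hσ0 : σf 0 = s₀ := Subtype.ext (by simp [σf])
        have hσ1 : σf 1 = s := Subtype.ext (by simp [σf])
        have hexp : ∀ u : I, u ∈ U → ((V (c i)) (g u (τ (i+1)))).2 = j →
            g u (τ (i+1)) = (V (c i)).toOpenPartialHomeomorph.symm (H (u, τ (i+1)), j) := by
          intro u hu hju
          have husrc : g u (τ (i+1)) ∈ (V (c i)).source := hsrc i hi u hu _ (hτmono i) le_rfl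
          conv_lhs => rw [← (V (c i)).toOpenPartialHomeomorph.left_inv husrc]
          congr 1
          rw [Bundle.Trivialization.coe_coe, ← (V (c i)).mk_proj_snd husrc]
          exact Prod.ext (hgp u _) hju
        have hbase1 : ∀ r : I, H (σf r, τ (i+1)) ∈ (V (c i)).baseSet :=
          fun r => hmemBase i hi (σf r) (hσU r) _ (hτmono i) le_rfl
        have hbase2 : ∀ r : I, H (σf r, τ (i+1)) ∈ (V (c (i+1))).baseSet :=
          fun r => hmemBase (i+1) hi1 (σf r) (hσU r) _ le_rfl (hτmono (i+1))
        have htar : ∀ r : I, ((H (σf r, τ (i+1)) : X), j) ∈ (V (c i)).target :=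
          fun r => (V (c i)).mem_target.2 (hbase1 r)
        have hinner : Continuous fun r : I => ((H (σf r, τ (i+1)) : X), j) :=
          (H.continuous.comp (hσc.prodMk continuous_const)).prodMk continuous_const
        have hmid : Continuous fun r : I =>
            (V (c i)).toOpenPartialHomeomorph.symm (H (σf r, τ (i+1)), j) :=
          (V (c i)).toOpenPartialHomeomorph.symm.continuousOn.comp_continuous hinner htar
        have hmid_src : ∀ r : I,
            (V (c i)).toOpenPartialHomeomorph.symm (H (σf r, τ (i+1)), j) ∈ (V (c (i+1))).source := by
          intro r
          apply (V (c (i+1))).mem_source.2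
          rw [(V (c i)).proj_symm_apply (htar r)]
          exact hbase2 r
        have hφc : Continuous fun r : I =>
            ((V (c (i+1))) ((V (c i)).toOpenPartialHomeomorph.symm (H (σf r, τ (i+1)), j))).2 :=
          continuous_snd.comp
            ((V (c (i+1))).toOpenPartialHomeomorph.continuousOn.comp_continuous hmid hmid_src)
        have hφconst :
            ((V (c (i+1))) ((V (c i)).toOpenPartialHomeomorph.symm (H (σf 1, τ (i+1)), j))).2 =
            ((V (c (i+1))) ((V (c i)).toOpenPartialHomeomorph.symm (H (σf 0, τ (i+1)), j))).2 :=
          (isPreconnected_univ.image _ hφc.continuousOn).subsingleton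
            (mem_image_of_mem _ (mem_univ 1)) (mem_image_of_mem _ (mem_univ 0))
        rw [hσ0, hσ1] at hφconst
        rw [hexp s hsU h1, hexp s₀ hs₀U hj.symm]
        exact hφconst
    -- transport along the last segment and conclude via injectivity
    have hn' : n < N := Nat.lt_succ_self n
    have hτn1 : τ (n+1) = 1 := by rw [← hNdef]; exact hτN
    have hlast : ((V (c n)) (g s 1)).2 = ((V (c n)) (g s₀ 1)).2 := by
      have h1 := hconst n hn' s hsU
      have h2 := hconst n hn' s₀ hs₀U
      rw [hτn1] at h1 h2
      rw [← h1, ← h2, claim n hn']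
    have hs1 : g s 1 ∈ (V (c n)).source := by
      have := hsrc n hn' s hsU 1 (hτn1 ▸ hτmono n) (hτn1 ▸ le_rfl)
      exact this
    have hs2 : g s₀ 1 ∈ (V (c n)).source := by
      have := hsrc n hn' s₀ hs₀U 1 (hτn1 ▸ hτmono n) (hτn1 ▸ le_rfl)
      exact this
    have hps : p (g s 1) = p (g s₀ 1) := by
      rw [hgp, hgp, H.target, H.target]
    refine (V (c n)).injOn hs1 hs2 (Prod.ext ?_ hlast)
    rw [Bundle.Trivialization.coe_coe, (V (c n)).coe_fst hs1, (V (c n)).coe_fst hs2, hps]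
  -- identify A and B with the chosen lifts
  have hA' : ⇑A = ⇑(g 0) := by
    refine hp.eq_of_comp_eq A.continuous (g 0).continuous (funext fun t => ?_) 0
      (by rw [hA0, hg0])
    show p (A t) = p (g 0 t)
    rw [hA t, hgp 0 t, H.apply_zero]
    rfl
  have hB' : ⇑B = ⇑(g 1) := by
    refine hp.eq_of_comp_eq B.continuous (g 1).continuous (funext fun t => ?_) 0
      (by rw [hB0, hg0])
    show p (B t) = p (g 1 t)
    rw [hB t, hgp 1 t, H.apply_one]
    rfl
  -- the endpoint map is locally constant, hence constant on the connected interval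
  set Z : Set I := {s : I | g s 1 = g 0 1} with hZ
  have hZopen : IsOpen Z := by
    rw [Metric.isOpen_iff]
    intro s₀ hs₀
    obtain ⟨ε, hε, hloc⟩ := key s₀
    exact ⟨ε, hε, fun s hs => by
      rw [hZ, mem_setOf_eq, hloc s (by rwa [Metric.mem_ball] at hs)]; exact hs₀⟩
  have hZclosed : IsClosed Z := by
    rw [← isOpen_compl_iff, Metric.isOpen_iff]
    intro s₀ hs₀
    obtain ⟨ε, hε, hloc⟩ := key s₀
    refine ⟨ε, hε, fun s hs hsZ => hs₀ ?_⟩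
    rw [hZ, mem_setOf_eq] at hsZ ⊢
    rw [← hloc s (by rwa [Metric.mem_ball] at hs)]
    exact hsZ
  have hZuniv : Z = univ := IsClopen.eq_univ ⟨hZclosed, hZopen⟩ ⟨0, rfl⟩
  have h1Z : g 1 1 = g 0 1 := by
    have : (1:I) ∈ Z := hZuniv ▸ mem_univ _
    exact this
  show A 1 = B 1
  rw [show A 1 = g 0 1 from congrFun hA' 1, show B 1 = g 1 1 from congrFun hB' 1]
  exact h1Z.symm

end CoveringLiftAux

/-! ### Auxiliary lemmas: fundamental group computations -/

namespace CoveringLiftAux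

universe u

attribute [local instance] Path.Homotopic.setoid

lemma fromLoop_surjective {X : Type u} [TopologicalSpace X] {x : X}
    (g : Aut (FundamentalGroupoid.mk x : FundamentalGroupoid X)) :
    ∃ γ : Path x x, g = FundamentalGroup.fromLoop γ := by
  obtain ⟨γ, hγ⟩ := Quotient.exists_rep (FundamentalGroup.toPath (X := TopCat.of X) (Iso.hom g))
  exact ⟨γ, Iso.ext hγ.symm⟩

lemma fromLoop_injective {X : Type u} [TopologicalSpace X] {x : X} {a b : Path x x}
    (h : FundamentalGroup.fromLoop a = FundamentalGroup.fromLoop b) : Path.Homotopic a b := by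
  have := congrArg Iso.hom h
  exact Quotient.exact this

lemma inducedHom_fromLoop {Y X : Type u} [TopologicalSpace Y] [TopologicalSpace X]
    (f : C(Y, X)) (y₀ : Y) (x₀ : X) (hf : f y₀ = x₀) (γ : Path y₀ y₀) :
    FundamentalGroup.inducedHom f y₀ x₀ hf (FundamentalGroup.fromLoop γ) =
      FundamentalGroup.fromLoop ((γ.map f.continuous).cast hf.symm hf.symm) := by
  subst hf
  apply Iso.ext
  show ((CategoryTheory.eqToIso _).conjAut
      ((CategoryTheory.Functor.mapAut _ _) (FundamentalGroup.fromLoop γ))).hom = _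
  rw [Iso.conjAut_hom, Iso.conj_apply]
  simp only [eqToIso.hom, eqToIso.inv, eqToHom_refl, Category.comp_id, Category.id_comp]
  exact (Category.id_comp _).trans (Category.comp_id _)

end CoveringLiftAux

/-- The subgroup formulation of the lifting criterion is equivalent to the loop-lifting
formulation: the image of `f⁎ : π₁(Y, y₀) →* π₁(X, x₀)` is contained in the image of
`p⁎ : π₁(E, e₀) →* π₁(X, x₀)` iff for every loop `γ` in `Y` based at `y₀`, the unique lift
of `f ∘ γ` starting at `e₀` ends at `e₀` (equivalently, `f ∘ γ` lifts to a loop at `e₀`). -/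
theorem range_le_range_iff_loops_lift {E X Y : Type u} [TopologicalSpace E] [TopologicalSpace X]
    [TopologicalSpace Y] {p : E → X} (hp : IsCoveringMap p) (e₀ : E) (x₀ : X) (he : p e₀ = x₀)
    (y₀ : Y) (f : C(Y, X)) (hf : f y₀ = x₀) :
    (FundamentalGroup.inducedHom f y₀ x₀ hf).range ≤
        (FundamentalGroup.inducedHom ⟨p, hp.continuous⟩ e₀ x₀ he).range ↔
      ∀ γ : Path y₀ y₀, ∃ δ : Path e₀ e₀, ∀ t, p (δ t) = f (γ t) := by
  subst he
  constructor
  · intro hle γ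
    have hmem := hle (MonoidHom.mem_range.2 ⟨FundamentalGroup.fromLoop γ, rfl⟩)
    obtain ⟨gE, hg⟩ := MonoidHom.mem_range.1 hmem
    obtain ⟨δ', rfl⟩ := CoveringLiftAux.fromLoop_surjective gE
    rw [CoveringLiftAux.inducedHom_fromLoop, CoveringLiftAux.inducedHom_fromLoop] at hg
    have hhom := CoveringLiftAux.fromLoop_injective hg
    set α : Path (p e₀) (p e₀) := (γ.map f.continuous).cast hf.symm hf.symm with hα
    obtain ⟨Γ, hΓ0, hΓp⟩ := CoveringLiftAux.exists_lift hp α.toContinuousMap e₀ α.source.symm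
    have hend : Γ 1 = e₀ := by
      have hB : ∀ t, p (δ'.toContinuousMap t) =
          (((δ'.map (ContinuousMap.mk p hp.continuous).continuous).cast rfl rfl : Path (p e₀) (p e₀)) t) :=
        fun t => rfl
      have := CoveringLiftAux.endpoint_eq hp hhom.symm (e₀ := e₀) rfl hΓ0 δ'.source hΓp hB
      rw [this]
      exact δ'.target
    refine ⟨{ toContinuousMap := Γ, source' := hΓ0, target' := hend }, fun t => ?_⟩
    exact hΓp t
  · intro hloop x hx
    obtain ⟨gY, hg⟩ := MonoidHom.mem_range.1 hx
    obtain ⟨γ, rfl⟩ := CoveringLiftAux.fromLoop_surjective gY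
    obtain ⟨δ, hδ⟩ := hloop γ
    refine MonoidHom.mem_range.2 ⟨FundamentalGroup.fromLoop δ, ?_⟩
    rw [← hg, CoveringLiftAux.inducedHom_fromLoop, CoveringLiftAux.inducedHom_fromLoop]
    congr 1
    ext t
    exact hδ t
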